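/- arXiv:1803.02932 — 6 statements merged into one kernel-verified Lean document; each statement's English description precedes it below -/
import Mathlib

section
/- Every normalized basis that is w-almost greedy with constant K is quasi-greedy with constant K+1, i.e., ||G_m(x)|| ≤ (K+1)||x|| for all x and m. -/
open Finset Filter

section Defs

variable {X : Type*} [NormedAddCommGroup X] [NormedSpace ℝ X]

/-- `wsum w A` is the `w`-measure of the finite set `A`. -/
def wsum (w : ℕ → ℝ) (A : Finset ℕ) : ℝ := ∑ i ∈ A, w i

/-- `e` is a normalized (Schauder) basis with biorthogonal functionals `E`. -/
def NormalizedBasis (e : ℕ → X) (E : ℕ → X →L[ℝ] ℝ) : Prop :=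
  (∀ n, ‖e n‖ = 1) ∧ (∀ n m, E n (e m) = if n = m then (1:ℝ) else 0) ∧
  ∀ x : X, Filter.Tendsto (fun N => ∑ n ∈ Finset.range N, E n x • e n)
    Filter.atTop (nhds x)

/-- `Λ` is a greedy set for `x`: every coefficient inside dominates every one outside. -/
def GreedySet (E : ℕ → X →L[ℝ] ℝ) (x : X) (Λ : Finset ℕ) : Prop :=
  ∀ n ∈ Λ, ∀ k, k ∉ Λ → |E k x| ≤ |E n x|

/-- quasi-greedy with constant `K`. -/
def QuasiGreedy (e : ℕ → X) (E : ℕ → X →L[ℝ] ℝ) (K : ℝ) : Prop :=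
  ∀ (x : X) (Λ : Finset ℕ), GreedySet E x Λ → ‖∑ n ∈ Λ, E n x • e n‖ ≤ K * ‖x‖

/-- `w`-almost greedy with constant `K`. -/
def WAlmostGreedy (w : ℕ → ℝ) (e : ℕ → X) (E : ℕ → X →L[ℝ] ℝ) (K : ℝ) : Prop :=
  ∀ (x : X) (Λ : Finset ℕ), GreedySet E x Λ →
    ∀ A : Finset ℕ, wsum w A ≤ wsum w Λ →
      ‖x - ∑ n ∈ Λ, E n x • e n‖ ≤ K * ‖x - ∑ n ∈ A, E n x • e n‖

/-- `w`-democratic with constant `D`. -/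
def WDemocratic (w : ℕ → ℝ) (e : ℕ → X) (D : ℝ) : Prop :=
  ∀ A B : Finset ℕ, wsum w A ≤ wsum w B →
    ‖∑ n ∈ A, e n‖ ≤ D * ‖∑ n ∈ B, e n‖

/-- best `m`-term (weighted) approximation error. -/
noncomputable def sigmaW (w : ℕ → ℝ) (e : ℕ → X) (u : ℝ) (x : X) : ℝ :=
  sInf {r | ∃ (A : Finset ℕ) (c : ℕ → ℝ), wsum w A ≤ u ∧ r = ‖x - ∑ n ∈ A, c n • e n‖}

/-- expansional best (weighted) approximation error. -/
noncomputable def sigmaTildeW (w : ℕ → ℝ) (e : ℕ → X) (E : ℕ → X →L[ℝ] ℝ)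
    (u : ℝ) (x : X) : ℝ :=
  sInf {r | ∃ A : Finset ℕ, wsum w A ≤ u ∧ r = ‖x - ∑ n ∈ A, E n x • e n‖}

/-- weighted fundamental function `φ^w`. -/
noncomputable def phiW (w : ℕ → ℝ) (e : ℕ → X) (u : ℝ) : ℝ :=
  sSup {r | ∃ A : Finset ℕ, wsum w A ≤ u ∧ r = ‖∑ n ∈ A, e n‖}

/-- the companion function `φ̂^w`. -/
noncomputable def phiHatW (w : ℕ → ℝ) (e : ℕ → X) (v : ℝ) : ℝ :=
  sInf {r | ∃ A : Finset ℕ, v < wsum w A ∧ r = ‖∑ n ∈ A, e n‖}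

/-- `w`-semi-greedy with constant `K`: some Chebyshev approximant on each greedy set
realizes the bound. -/
def WSemiGreedy (w : ℕ → ℝ) (e : ℕ → X) (E : ℕ → X →L[ℝ] ℝ) (K : ℝ) : Prop :=
  ∀ (x : X) (Λ : Finset ℕ), GreedySet E x Λ →
    ∃ c : ℕ → ℝ, ‖x - ∑ n ∈ Λ, c n • e n‖ ≤ K * sigmaW w e (wsum w Λ) x

/-- a sequence of signs. -/
def SignVec (ε : ℕ → ℝ) : Prop := ∀ n, ε n = 1 ∨ ε n = -1

/-- `w`-superdemocratic with constant `D`. -/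
def WSuperDemocratic (w : ℕ → ℝ) (e : ℕ → X) (D : ℝ) : Prop :=
  ∀ A B : Finset ℕ, wsum w A ≤ wsum w B → ∀ ε δ : ℕ → ℝ, SignVec ε → SignVec δ →
    ‖∑ n ∈ A, ε n • e n‖ ≤ D * ‖∑ n ∈ B, δ n • e n‖

/-- `β` bounds the partial-sum projections (basis constant bound). -/
def BasisConstBound (e : ℕ → X) (E : ℕ → X →L[ℝ] ℝ) (β : ℝ) : Prop :=
  ∀ (x : X) (N : ℕ), ‖∑ n ∈ Finset.range N, E n x • e n‖ ≤ β * ‖x‖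

/-- equivalence to the unit vector basis of `c₀`. -/
def EquivC0 (e : ℕ → X) : Prop :=
  ∃ c C : ℝ, 0 < c ∧ ∀ (A : Finset ℕ) (a : ℕ → ℝ),
    (∀ n ∈ A, c * |a n| ≤ ‖∑ m ∈ A, a m • e m‖) ∧
    (∀ M : ℝ, (∀ n ∈ A, |a n| ≤ M) → ‖∑ n ∈ A, a n • e n‖ ≤ C * M)

/-- conservative with constant `C`. -/
def Conservative (e : ℕ → X) (C : ℝ) : Prop :=
  ∀ A B : Finset ℕ, A.card ≤ B.card → (∀ a ∈ A, ∀ b ∈ B, a < b) →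
    ‖∑ n ∈ A, e n‖ ≤ C * ‖∑ n ∈ B, e n‖

/-- `X` has finite cotype. -/
def FiniteCotype (X : Type*) [NormedAddCommGroup X] [NormedSpace ℝ X] : Prop :=
  ∃ (q C : ℝ), 2 ≤ q ∧ 0 < C ∧ ∀ (n : ℕ) (x : Fin n → X),
    (∑ j, ‖x j‖ ^ q) ^ (1/q) ≤
      C * ((∑ ε : Fin n → Bool,
        ‖∑ j, (if ε j then (1:ℝ) else -1) • x j‖ ^ q) / 2 ^ n) ^ (1/q)

end Defs

/-- every normalized `K`-`w`-almost greedy basis is `(K+1)`-quasi-greedy. -/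
theorem stmt0 {X : Type*} [NormedAddCommGroup X] [NormedSpace ℝ X] [CompleteSpace X]
    (e : ℕ → X) (E : ℕ → X →L[ℝ] ℝ) (w : ℕ → ℝ) (K : ℝ)
    (hw : ∀ i, 0 < w i) (hb : NormalizedBasis e E)
    (h : WAlmostGreedy w e E K) :
    QuasiGreedy e E (K + 1) := by
  intro x Λ hΛ
  have h0 : wsum w (∅ : Finset ℕ) ≤ wsum w Λ := by
    simp [wsum]
    exact Finset.sum_nonneg fun i _ => (hw i).le
  have := h x Λ hΛ ∅ h0
  simp [wsum] at this
  calc ‖∑ n ∈ Λ, E n x • e n‖ = ‖x - (x - ∑ n ∈ Λ, E n x • e n)‖ := by rw [sub_sub_cancel]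
    _ ≤ ‖x‖ + ‖x - ∑ n ∈ Λ, E n x • e n‖ := norm_sub_le _ _
    _ ≤ ‖x‖ + K * ‖x‖ := by linarith
    _ = (K + 1) * ‖x‖ := by ring
end

section
/- Every normalized K-w-almost greedy basis of a real Banach space is w-democratic with constant at most K: if w(A) ≤ w(B) for finite sets A, B, then ||Σ_{n∈A} e_n|| ≤ K ||Σ_{n∈B} e_n||. -/
open Finset Filter

/-- every normalized `K`-`w`-almost greedy basis of a real Banach space is
`w`-democratic with constant at most `K`. -/
theorem stmt1 {X : Type*} [NormedAddCommGroup X] [NormedSpace ℝ X] [CompleteSpace X]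
    (e : ℕ → X) (E : ℕ → X →L[ℝ] ℝ) (w : ℕ → ℝ) (K : ℝ)
    (hw : ∀ i, 0 < w i) (hb : NormalizedBasis e E)
    (h : WAlmostGreedy w e E K) :
    WDemocratic w e K := by
  intro A B hAB
  obtain ⟨hnorm, hbio, _⟩ := hb
  set S := A ∪ B with hS
  set x := ∑ n ∈ S, e n with hx
  have hEx : ∀ n, E n x = if n ∈ S then 1 else 0 := by
    intro n
    rw [hx, map_sum]
    simp only [hbio]
    exact Finset.sum_ite_eq S n (fun _ => (1:ℝ))
  have key : ∀ Λ : Finset ℕ, Λ ⊆ S → ∑ n ∈ Λ, E n x • e n = ∑ n ∈ Λ, e n := by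
    intro Λ hΛ
    refine Finset.sum_congr rfl fun n hn => ?_
    rw [hEx, if_pos (hΛ hn), one_smul]
  have hgreedy : GreedySet E x (B \ A) := by
    intro n hn k _
    rw [hEx, hEx, if_pos (Finset.mem_union_right _ (Finset.mem_sdiff.mp hn).1)]
    split <;> simp
  have hw1 := Finset.sum_inter_add_sum_sdiff A B w
  have hw2 := Finset.sum_inter_add_sum_sdiff B A w
  rw [Finset.inter_comm] at hw2
  have hwle : wsum w (A \ B) ≤ wsum w (B \ A) := by
    unfold wsum at hAB ⊢; linarith
  have hmain := h x (B \ A) hgreedy (A \ B) hwle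
  have hBsub : B \ A ⊆ S := Finset.sdiff_subset.trans Finset.subset_union_right
  have hAsub : A \ B ⊆ S := Finset.sdiff_subset.trans Finset.subset_union_left
  have e1 : x - ∑ n ∈ B \ A, E n x • e n = ∑ n ∈ A, e n := by
    rw [key _ hBsub, hx, ← Finset.sum_sdiff hBsub]
    have hset : S \ (B \ A) = A := by
      ext n; simp only [hS, Finset.mem_sdiff, Finset.mem_union]; tauto
    rw [hset]; abel
  have e2 : x - ∑ n ∈ A \ B, E n x • e n = ∑ n ∈ B, e n := by
    rw [key _ hAsub, hx, ← Finset.sum_sdiff hAsub]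
    have hset : S \ (A \ B) = B := by
      ext n; simp only [hS, Finset.mem_sdiff, Finset.mem_union]; tauto
    rw [hset]; abel
  rw [e1, e2] at hmain
  exact hmain
end

section
/- If a normalized basis of a real Banach space is K-quasi-greedy and D-w-democratic, then it is w-almost greedy with constant at most 8K⁴D + K + 1. -/
open Finset Filter

section Aux

variable {X : Type*} [NormedAddCommGroup X] [NormedSpace ℝ X]

private lemma abel_layer (v : ℕ → X) (M : ℝ) (hM : 0 ≤ M) (B : Finset ℕ) :
    ∀ (b : ℕ → ℝ) (c : ℝ), 0 ≤ c →
      (∀ n ∈ B, 0 ≤ b n ∧ b n ≤ c) →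
      (∀ s : ℝ, 0 < s → ‖∑ n ∈ B.filter (fun n => s ≤ b n), v n‖ ≤ M) →
      ‖∑ n ∈ B, b n • v n‖ ≤ c * M := by
  induction B using Finset.strongInduction with
  | _ B ih =>
    intro b c hc hbc hlev
    rcases B.eq_empty_or_nonempty with rfl | hne
    · simpa using mul_nonneg hc hM
    set m := B.inf' hne b with hm
    obtain ⟨n₀, hn₀, hbn₀⟩ := Finset.exists_mem_eq_inf' hne b
    have hmle : ∀ n ∈ B, m ≤ b n := fun n hn => Finset.inf'_le b hn
    have hmeq : m = b n₀ := hbn₀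
    have hm0 : 0 ≤ m := hmeq ▸ (hbc n₀ hn₀).1
    have hmc : m ≤ c := hmeq ▸ (hbc n₀ hn₀).2
    set B' := B.filter (fun n => m < b n) with hB'
    have hss : B' ⊂ B := by
      refine Finset.filter_ssubset.2 ⟨n₀, hn₀, ?_⟩
      simp [← hbn₀]
      exact ⟨n₀, hn₀, hmeq.ge⟩
    have key : ∑ n ∈ B, b n • v n
        = m • (∑ n ∈ B, v n) + ∑ n ∈ B', (b n - m) • v n := by
      have h1 : ∑ n ∈ B', (b n - m) • v n = ∑ n ∈ B, (b n - m) • v n := by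
        apply Finset.sum_filter_of_ne
        intro n hn hne0
        rcases lt_or_eq_of_le (hmle n hn) with h | h
        · exact h
        · exact absurd (by rw [← h]; simp) hne0
      rw [h1, Finset.smul_sum, ← Finset.sum_add_distrib]
      refine Finset.sum_congr rfl fun n _ => ?_
      rw [← add_smul]
      norm_num
    have h2 : ‖∑ n ∈ B', (b n - m) • v n‖ ≤ (c - m) * M := by
      apply ih B' hss (fun n => b n - m) (c - m) (by linarith)
      · intro n hn
        have hn' := Finset.mem_filter.1 hn
        exact ⟨by linarith [hn'.2], by linarith [(hbc n hn'.1).2]⟩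
      · intro s hs
        have hset : B'.filter (fun n => s ≤ b n - m) = B.filter (fun n => s + m ≤ b n) := by
          ext n
          simp only [hB', Finset.mem_filter, Finset.filter_filter]
          constructor
          · rintro ⟨h1', h2', h3'⟩; exact ⟨h1', by linarith⟩
          · rintro ⟨h1', h2'⟩; exact ⟨h1', by linarith, by linarith⟩
        rw [hset]
        exact hlev (s + m) (by linarith)
    have h3 : ‖m • ∑ n ∈ B, v n‖ ≤ m * M := by
      rcases eq_or_lt_of_le hm0 with h | h
      · simp [← h]
      · have hset : B.filter (fun n => m ≤ b n) = B :=
          Finset.filter_true_of_mem hmle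
        have h4 := hlev m h
        rw [hset] at h4
        rw [norm_smul, Real.norm_eq_abs, abs_of_nonneg hm0]
        exact mul_le_mul_of_nonneg_left h4 hm0
    calc ‖∑ n ∈ B, b n • v n‖ ≤ ‖m • ∑ n ∈ B, v n‖ + ‖∑ n ∈ B', (b n - m) • v n‖ := by
          rw [key]; exact norm_add_le _ _
      _ ≤ m * M + (c - m) * M := add_le_add h3 h2
      _ = c * M := by ring

private lemma coeff_sum {e : ℕ → X} {E : ℕ → X →L[ℝ] ℝ}
    (hbi : ∀ n m, E n (e m) = if n = m then (1:ℝ) else 0)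
    (S : Finset ℕ) (c : ℕ → ℝ) (k : ℕ) :
    E k (∑ n ∈ S, c n • e n) = if k ∈ S then c k else 0 := by
  rw [map_sum]
  have h : ∀ n ∈ S, E k (c n • e n) = if n = k then c n else 0 := by
    intro n _
    rw [map_smul, smul_eq_mul, hbi k n]
    by_cases h : k = n
    · simp [h]
    · simp [h, Ne.symm h]
  rw [Finset.sum_congr rfl h, Finset.sum_ite_eq' S k c]

end Aux

set_option maxHeartbeats 2000000 in
/-- a `K`-quasi-greedy, `D`-`w`-democratic normalized basis of a real Banach
space is `w`-almost greedy with constant at most `8K⁴D + K + 1`. -/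
theorem stmt2 {X : Type*} [NormedAddCommGroup X] [NormedSpace ℝ X] [CompleteSpace X]
    (e : ℕ → X) (E : ℕ → X →L[ℝ] ℝ) (w : ℕ → ℝ) (K D : ℝ)
    (hw : ∀ i, 0 < w i) (hb : NormalizedBasis e E)
    (hK : QuasiGreedy e E K) (hD : WDemocratic w e D) :
    WAlmostGreedy w e E (8 * K ^ 4 * D + K + 1) := by
  intro x Λ hΛ A hA
  obtain ⟨hone, hbi, -⟩ := hb
  set a : ℕ → ℝ := fun n => E n x with ha
  set y : X := x - ∑ n ∈ A, E n x • e n with hy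
  show ‖x - ∑ n ∈ Λ, a n • e n‖ ≤ (8 * K ^ 4 * D + K + 1) * ‖y‖
  have hK1 : (1:ℝ) ≤ K := by
    have hg : GreedySet E (e 0) {0} := by
      intro n hn k hk
      simp only [Finset.mem_singleton] at hn
      subst hn
      simp only [Finset.mem_singleton] at hk
      rw [hbi k 0, hbi 0 0]
      simp [hk]
    have h := hK (e 0) {0} hg
    simpa [hbi 0 0, hone 0] using h
  have hD1 : (1:ℝ) ≤ D := by
    have h := hD {0} {0} le_rfl
    simpa [hone 0] using h
  have hcoef := coeff_sum hbi
  have hEy : ∀ k, E k y = E k x - (if k ∈ A then E k x else 0) := by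
    intro k
    rw [hy, map_sub, hcoef A (fun n => E n x) k]
  have hEyO : ∀ k, k ∉ A → E k y = a k := by
    intro k hk; rw [hEy k, if_neg hk]; simp [ha]
  set B : Finset ℕ := Λ \ A with hB
  set Γ : Finset ℕ := A \ Λ with hΓ
  -- decomposition
  have hdecomp : x - ∑ n ∈ Λ, a n • e n
      = y - (∑ n ∈ B, a n • e n) + (∑ n ∈ Γ, a n • e n) := by
    have h1 : ∑ n ∈ B, a n • e n
        = ∑ n ∈ Λ, a n • e n - ∑ n ∈ Λ ∩ A, a n • e n := by
      rw [hB, ← Finset.sdiff_inter_self_left Λ A]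
      exact Finset.sum_sdiff_eq_sub Finset.inter_subset_left
    have h2 : ∑ n ∈ Γ, a n • e n
        = ∑ n ∈ A, a n • e n - ∑ n ∈ A ∩ Λ, a n • e n := by
      rw [hΓ, ← Finset.sdiff_inter_self_left A Λ]
      exact Finset.sum_sdiff_eq_sub Finset.inter_subset_left
    have h3 : ∑ n ∈ A ∩ Λ, a n • e n = ∑ n ∈ Λ ∩ A, a n • e n := by
      rw [Finset.inter_comm]
    have h4 : y = x - ∑ n ∈ A, a n • e n := hy
    rw [h1, h2, h3, h4]
    abel
  have hy0 : 0 ≤ ‖y‖ := norm_nonneg y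
  -- trivial case B = ∅
  rcases B.eq_empty_or_nonempty with hBe | hBne
  · have hΛA : Λ ⊆ A := by
      rw [← Finset.sdiff_eq_empty_iff_subset]; exact hBe
    have hAΛ : A = Λ := by
      by_contra hne
      have hΓne : Γ.Nonempty := by
        rw [hΓ, Finset.sdiff_nonempty]
        intro hAΛ'
        exact hne (Finset.Subset.antisymm hAΛ' hΛA)
      have h1 : wsum w Λ + wsum w Γ = wsum w A := by
        have := Finset.sum_sdiff (f := w) hΛA
        simp only [wsum, hΓ]
        linarith [this]
      have h2 : 0 < wsum w Γ := Finset.sum_pos (fun i _ => hw i) hΓne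
      linarith
    have hgoal : x - ∑ n ∈ Λ, a n • e n = y := by
      rw [hy, hAΛ]
    rw [hgoal]
    have hc1 : (1:ℝ) ≤ 8 * K ^ 4 * D + K + 1 := by
      have hK0 : (0:ℝ) ≤ K := by linarith
      have hD0 : (0:ℝ) ≤ D := by linarith
      have h8 : (0:ℝ) ≤ 8 * K ^ 4 * D :=
        mul_nonneg (mul_nonneg (by norm_num) (pow_nonneg hK0 4)) hD0
      linarith
    calc ‖y‖ = 1 * ‖y‖ := (one_mul _).symm
      _ ≤ (8 * K ^ 4 * D + K + 1) * ‖y‖ := mul_le_mul_of_nonneg_right hc1 hy0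
  -- main case
  have hBgreedy : GreedySet E y B := by
    intro n hn k hk
    obtain ⟨hnΛ, hnA⟩ := Finset.mem_sdiff.1 hn
    rw [hEyO n hnA]
    by_cases hkA : k ∈ A
    · rw [hEy k, if_pos hkA]; simp [abs_nonneg]
    · have hkΛ : k ∉ Λ := fun hkΛ => hk (Finset.mem_sdiff.2 ⟨hkΛ, hkA⟩)
      rw [hEyO k hkA]
      exact hΛ n hnΛ k hkΛ
  have hPBsum : ∑ n ∈ B, E n y • e n = ∑ n ∈ B, a n • e n := by
    refine Finset.sum_congr rfl fun n hn => ?_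
    rw [hEyO n (Finset.mem_sdiff.1 hn).2]
  have hPB : ‖∑ n ∈ B, a n • e n‖ ≤ K * ‖y‖ := by
    rw [← hPBsum]; exact hK y B hBgreedy
  set z' : X := ∑ n ∈ B, a n • e n with hz'
  have hz'0 : 0 ≤ ‖z'‖ := norm_nonneg z'
  set t : ℝ := B.inf' hBne (fun n => |a n|) with ht
  have htle : ∀ n ∈ B, t ≤ |a n| := fun n hn => Finset.inf'_le _ hn
  have ht0 : 0 ≤ t := by
    obtain ⟨n₁, hn₁, hv⟩ := Finset.exists_mem_eq_inf' hBne (fun n => |a n|)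
    rw [ht, hv]; exact abs_nonneg _
  have htΓ : ∀ k ∈ Γ, |a k| ≤ t := by
    intro k hk
    obtain ⟨hkA, hkΛ⟩ := Finset.mem_sdiff.1 hk
    obtain ⟨n₁, hn₁, hv⟩ := Finset.exists_mem_eq_inf' hBne (fun n => |a n|)
    rw [ht, hv]
    exact hΛ n₁ (Finset.mem_sdiff.1 hn₁).1 k hkΛ
  -- bound on Γ sum
  have hΓbound : ‖∑ n ∈ Γ, a n • e n‖ ≤ 4 * K ^ 2 * (1 + K) * D * ‖y‖ := by
    rcases eq_or_lt_of_le ht0 with ht0' | htpos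
    · -- t = 0 : all Γ coefficients vanish
      have hz : ∀ n ∈ Γ, a n • e n = 0 := by
        intro n hn
        have h1 : |a n| ≤ 0 := ht0' ▸ htΓ n hn
        have h2 : a n = 0 := abs_nonpos_iff.1 h1
        simp [h2]
      rw [Finset.sum_eq_zero hz]
      simp only [norm_zero]
      positivity
    -- t > 0
    have htne : t ≠ 0 := ne_of_gt htpos
    set ε : ℕ → ℝ := fun n => |a n|⁻¹ * a n with hε
    have hz'coef : ∀ k, E k z' = if k ∈ B then a k else 0 := fun k => hcoef B a k
    have hMz : (0:ℝ) ≤ (1 + K) * ‖z'‖ := by positivity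
    -- Step A1: truncation bound via abel_layer
    have hA1 : ‖∑ n ∈ B, ε n • e n‖ ≤ t⁻¹ * ((1 + K) * ‖z'‖) := by
      have habs : ∀ n ∈ B, (0:ℝ) ≤ |a n|⁻¹ ∧ |a n|⁻¹ ≤ t⁻¹ := by
        intro n hn
        exact ⟨by positivity, inv_anti₀ htpos (htle n hn)⟩
      have hlev : ∀ s : ℝ, 0 < s →
          ‖∑ n ∈ B.filter (fun n => s ≤ |a n|⁻¹), a n • e n‖ ≤ (1 + K) * ‖z'‖ := by
        intro s hs
        set S := B.filter (fun n => s ≤ |a n|⁻¹) with hS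
        set C := B \ S with hC
        have hSB : S ⊆ B := Finset.filter_subset _ _
        have hCB : C ⊆ B := Finset.sdiff_subset
        have hCgreedy : GreedySet E z' C := by
          intro n hn k hk
          have hnB : n ∈ B := hCB hn
          have hnS : n ∉ S := (Finset.mem_sdiff.1 hn).2
          have hns : |a n|⁻¹ < s := by
            by_contra hcon
            exact hnS (Finset.mem_filter.2 ⟨hnB, le_of_not_gt hcon⟩)
          have hanpos : 0 < |a n| := lt_of_lt_of_le htpos (htle n hnB)
          have hninv : s⁻¹ < |a n| := by
            have h1 : 1 < |a n| * s := by
              have h2 := mul_lt_mul_of_pos_left hns hanpos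
              rwa [mul_inv_cancel₀ (ne_of_gt hanpos)] at h2
            calc s⁻¹ = 1 * s⁻¹ := (one_mul _).symm
              _ < (|a n| * s) * s⁻¹ := mul_lt_mul_of_pos_right h1 (inv_pos.2 hs)
              _ = |a n| := by rw [mul_assoc, mul_inv_cancel₀ (ne_of_gt hs), mul_one]
          rw [hz'coef n, if_pos hnB, hz'coef k]
          by_cases hkB : k ∈ B
          · have hkS : k ∈ S := by
              by_contra hkS'
              exact hk (Finset.mem_sdiff.2 ⟨hkB, hkS'⟩)
            have hks : s ≤ |a k|⁻¹ := (Finset.mem_filter.1 hkS).2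
            have hakpos : 0 < |a k| := lt_of_lt_of_le htpos (htle k hkB)
            have hles : |a k| ≤ s⁻¹ := by
              have h1 : |a k| * s ≤ 1 := by
                have h2 := mul_le_mul_of_nonneg_left hks (abs_nonneg (a k))
                rwa [mul_inv_cancel₀ (ne_of_gt hakpos)] at h2
              calc |a k| = (|a k| * s) * s⁻¹ := by
                    rw [mul_assoc, mul_inv_cancel₀ (ne_of_gt hs), mul_one]
                _ ≤ 1 * s⁻¹ := mul_le_mul_of_nonneg_right h1 (inv_pos.2 hs).le
                _ = s⁻¹ := one_mul _
            rw [if_pos hkB]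
            linarith
          · rw [if_neg hkB]
            simp [abs_nonneg]
        have hGle := hK z' C hCgreedy
        have hGsum : ∑ n ∈ C, E n z' • e n = ∑ n ∈ C, a n • e n := by
          refine Finset.sum_congr rfl fun n hn => ?_
          rw [hz'coef n, if_pos (hCB hn)]
        rw [hGsum] at hGle
        have hsplit : ∑ n ∈ S, a n • e n = z' - ∑ n ∈ C, a n • e n := by
          have := Finset.sum_sdiff (f := fun n => a n • e n) hSB
          rw [hz']
          rw [← this]
          abel
        rw [hsplit]
        calc ‖z' - ∑ n ∈ C, a n • e n‖ ≤ ‖z'‖ + ‖∑ n ∈ C, a n • e n‖ := norm_sub_le _ _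
          _ ≤ ‖z'‖ + K * ‖z'‖ := by linarith
          _ = (1 + K) * ‖z'‖ := by ring
      have habel := abel_layer (fun n => a n • e n) ((1 + K) * ‖z'‖) hMz B
        (fun n => |a n|⁻¹) t⁻¹ (by positivity) habs hlev
      have hrw : ∑ n ∈ B, |a n|⁻¹ • (a n • e n) = ∑ n ∈ B, ε n • e n := by
        refine Finset.sum_congr rfl fun n _ => ?_
        rw [smul_smul, hε]
      rw [hrw] at habel
      exact habel
    -- Step A2: from signed sum to plain sum
    set z : X := ∑ n ∈ B, ε n • e n with hz
    have hzcoef : ∀ k, E k z = if k ∈ B then ε k else 0 := fun k => hcoef B ε k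
    have hεabs : ∀ n ∈ B, |ε n| = 1 := by
      intro n hn
      have hanpos : 0 < |a n| := lt_of_lt_of_le htpos (htle n hn)
      rw [hε]
      rw [abs_mul, abs_inv, abs_abs]
      field_simp
    have hgreedyS : ∀ S : Finset ℕ, S ⊆ B → GreedySet E z S := by
      intro S hSB n hn k _
      rw [hzcoef n, if_pos (hSB hn), hεabs n (hSB hn), hzcoef k]
      by_cases hkB : k ∈ B
      · rw [if_pos hkB, hεabs k hkB]
      · rw [if_neg hkB]; simp
    have hBesplit : ∑ n ∈ B, e n
        = ∑ n ∈ B.filter (fun n => 0 < a n), e n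
          + ∑ n ∈ B.filter (fun n => ¬ 0 < a n), e n :=
      (Finset.sum_filter_add_sum_filter_not B _ _).symm
    have hp := hK z (B.filter (fun n => 0 < a n)) (hgreedyS _ (Finset.filter_subset _ _))
    have hm := hK z (B.filter (fun n => ¬ 0 < a n)) (hgreedyS _ (Finset.filter_subset _ _))
    have hpsum : ∑ n ∈ B.filter (fun n => 0 < a n), E n z • e n
        = ∑ n ∈ B.filter (fun n => 0 < a n), e n := by
      refine Finset.sum_congr rfl fun n hn => ?_
      obtain ⟨hnB, hna⟩ := Finset.mem_filter.1 hn
      rw [hzcoef n, if_pos hnB]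
      simp only [hε]
      have h3 : |a n| = a n := abs_of_pos hna
      rw [h3, inv_mul_cancel₀ (ne_of_gt hna), one_smul]
    have hmsum : ∑ n ∈ B.filter (fun n => ¬ 0 < a n), E n z • e n
        = - ∑ n ∈ B.filter (fun n => ¬ 0 < a n), e n := by
      rw [← Finset.sum_neg_distrib]
      refine Finset.sum_congr rfl fun n hn => ?_
      obtain ⟨hnB, hna⟩ := Finset.mem_filter.1 hn
      have hanpos : 0 < |a n| := lt_of_lt_of_le htpos (htle n hnB)
      have hneg : a n < 0 := by
        rcases lt_trichotomy (a n) 0 with h | h | h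
        · exact h
        · rw [h, abs_zero] at hanpos; linarith
        · exact absurd h hna
      rw [hzcoef n, if_pos hnB]
      simp only [hε]
      have h1 : |a n| = -a n := abs_of_neg hneg
      rw [h1]
      have h2 : (-a n)⁻¹ * a n = -1 := by
        rw [inv_neg, neg_mul, inv_mul_cancel₀ (ne_of_lt hneg)]
      rw [h2]
      simp
    rw [hpsum] at hp
    rw [hmsum, norm_neg] at hm
    have hBenorm : ‖∑ n ∈ B, e n‖ ≤ 2 * K * ‖z‖ := by
      calc ‖∑ n ∈ B, e n‖
          ≤ ‖∑ n ∈ B.filter (fun n => 0 < a n), e n‖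
            + ‖∑ n ∈ B.filter (fun n => ¬ 0 < a n), e n‖ := by
            rw [hBesplit]; exact norm_add_le _ _
        _ ≤ K * ‖z‖ + K * ‖z‖ := add_le_add hp hm
        _ = 2 * K * ‖z‖ := by ring
    have htmul : t * ‖∑ n ∈ B, e n‖ ≤ 2 * K * (1 + K) * ‖z'‖ := by
      have h1 : ‖∑ n ∈ B, e n‖ ≤ 2 * K * (t⁻¹ * ((1 + K) * ‖z'‖)) := by
        calc ‖∑ n ∈ B, e n‖ ≤ 2 * K * ‖z‖ := hBenorm
          _ ≤ 2 * K * (t⁻¹ * ((1 + K) * ‖z'‖)) := by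
              apply mul_le_mul_of_nonneg_left hA1
              nlinarith [hK1]
      have h2 : t * (2 * K * (t⁻¹ * ((1 + K) * ‖z'‖)))
          = 2 * K * (1 + K) * ‖z'‖ := by
        field_simp
      calc t * ‖∑ n ∈ B, e n‖ ≤ t * (2 * K * (t⁻¹ * ((1 + K) * ‖z'‖))) :=
            mul_le_mul_of_nonneg_left h1 ht0
        _ = 2 * K * (1 + K) * ‖z'‖ := h2
    -- Step B: democracy
    have hwΓB : wsum w Γ ≤ wsum w B := by
      have e1 : ∑ i ∈ A ∩ Λ, w i + ∑ i ∈ A \ Λ, w i = ∑ i ∈ A, w i :=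
        Finset.sum_inter_add_sum_sdiff A Λ w
      have e2 : ∑ i ∈ Λ ∩ A, w i + ∑ i ∈ Λ \ A, w i = ∑ i ∈ Λ, w i :=
        Finset.sum_inter_add_sum_sdiff Λ A w
      have e3 : ∑ i ∈ A ∩ Λ, w i = ∑ i ∈ Λ ∩ A, w i := by rw [Finset.inter_comm]
      simp only [wsum] at hA ⊢
      rw [hΓ, hB]
      linarith
    have hdem : ∀ S : Finset ℕ, S ⊆ Γ → ‖∑ n ∈ S, e n‖ ≤ D * ‖∑ n ∈ B, e n‖ := by
      intro S hS
      apply hD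
      calc wsum w S ≤ wsum w Γ := by
            simp only [wsum]
            exact Finset.sum_le_sum_of_subset_of_nonneg hS (fun i _ _ => (hw i).le)
        _ ≤ wsum w B := hwΓB
    have hMd : (0:ℝ) ≤ D * ‖∑ n ∈ B, e n‖ := by
      have := norm_nonneg (∑ n ∈ B, e n)
      nlinarith [hD1]
    have hΓp : ‖∑ n ∈ Γ.filter (fun n => 0 ≤ a n), a n • e n‖
        ≤ t * (D * ‖∑ n ∈ B, e n‖) := by
      apply abel_layer e (D * ‖∑ n ∈ B, e n‖) hMd _ a t ht0
      · intro n hn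
        obtain ⟨hnΓ, hna⟩ := Finset.mem_filter.1 hn
        exact ⟨hna, le_trans (le_abs_self _) (htΓ n hnΓ)⟩
      · intro s hs
        apply hdem
        exact Finset.Subset.trans (Finset.filter_subset _ _) (Finset.filter_subset _ _)
    have hΓm : ‖∑ n ∈ Γ.filter (fun n => ¬ 0 ≤ a n), a n • e n‖
        ≤ t * (D * ‖∑ n ∈ B, e n‖) := by
      have heq : ∑ n ∈ Γ.filter (fun n => ¬ 0 ≤ a n), a n • e n
          = - ∑ n ∈ Γ.filter (fun n => ¬ 0 ≤ a n), (-a n) • e n := by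
        rw [← Finset.sum_neg_distrib]
        refine Finset.sum_congr rfl fun n _ => ?_
        rw [neg_smul, neg_neg]
      rw [heq, norm_neg]
      apply abel_layer e (D * ‖∑ n ∈ B, e n‖) hMd _ (fun n => -a n) t ht0
      · intro n hn
        obtain ⟨hnΓ, hna⟩ := Finset.mem_filter.1 hn
        have hna' : a n < 0 := lt_of_not_ge hna
        constructor
        · linarith
        · have := htΓ n hnΓ
          rw [abs_of_neg hna'] at this
          linarith
      · intro s hs
        apply hdem
        exact Finset.Subset.trans (Finset.filter_subset _ _) (Finset.filter_subset _ _)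
    have hΓsplit : ∑ n ∈ Γ, a n • e n
        = ∑ n ∈ Γ.filter (fun n => 0 ≤ a n), a n • e n
          + ∑ n ∈ Γ.filter (fun n => ¬ 0 ≤ a n), a n • e n :=
      (Finset.sum_filter_add_sum_filter_not Γ _ _).symm
    have hfinal : ‖∑ n ∈ Γ, a n • e n‖ ≤ 2 * (t * (D * ‖∑ n ∈ B, e n‖)) := by
      calc ‖∑ n ∈ Γ, a n • e n‖
          ≤ ‖∑ n ∈ Γ.filter (fun n => 0 ≤ a n), a n • e n‖
            + ‖∑ n ∈ Γ.filter (fun n => ¬ 0 ≤ a n), a n • e n‖ := by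
            rw [hΓsplit]; exact norm_add_le _ _
        _ ≤ 2 * (t * (D * ‖∑ n ∈ B, e n‖)) := by linarith
    have hchain : 2 * (t * (D * ‖∑ n ∈ B, e n‖)) ≤ 2 * D * (2 * K * (1 + K) * ‖z'‖) := by
      have h1 : t * (D * ‖∑ n ∈ B, e n‖) = D * (t * ‖∑ n ∈ B, e n‖) := by ring
      rw [h1]
      have h2 : D * (t * ‖∑ n ∈ B, e n‖) ≤ D * (2 * K * (1 + K) * ‖z'‖) :=
        mul_le_mul_of_nonneg_left htmul (by linarith)
      linarith
    have hlast : 2 * D * (2 * K * (1 + K) * ‖z'‖) ≤ 4 * K ^ 2 * (1 + K) * D * ‖y‖ := by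
      have h1 : 2 * D * (2 * K * (1 + K) * ‖z'‖) = 4 * K * (1 + K) * D * ‖z'‖ := by ring
      rw [h1]
      have hK0 : (0:ℝ) ≤ K := by linarith
      have hD0 : (0:ℝ) ≤ D := by linarith
      have h2 : 4 * K * (1 + K) * D * ‖z'‖ ≤ 4 * K * (1 + K) * D * (K * ‖y‖) := by
        apply mul_le_mul_of_nonneg_left hPB
        exact mul_nonneg (mul_nonneg (by linarith) (by linarith)) hD0
      calc 4 * K * (1 + K) * D * ‖z'‖ ≤ 4 * K * (1 + K) * D * (K * ‖y‖) := h2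
        _ = 4 * K ^ 2 * (1 + K) * D * ‖y‖ := by ring
    linarith
  -- final assembly
  have hnorm : ‖x - ∑ n ∈ Λ, a n • e n‖
      ≤ ‖y‖ + ‖∑ n ∈ B, a n • e n‖ + ‖∑ n ∈ Γ, a n • e n‖ := by
    rw [hdecomp]
    calc ‖y - (∑ n ∈ B, a n • e n) + (∑ n ∈ Γ, a n • e n)‖
        ≤ ‖y - ∑ n ∈ B, a n • e n‖ + ‖∑ n ∈ Γ, a n • e n‖ := norm_add_le _ _
      _ ≤ ‖y‖ + ‖∑ n ∈ B, a n • e n‖ + ‖∑ n ∈ Γ, a n • e n‖ := by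
          linarith [norm_sub_le y (∑ n ∈ B, a n • e n)]
  have hcon : 4 * K ^ 2 * (1 + K) * D ≤ 8 * K ^ 4 * D := by
    have hK0 : (0:ℝ) ≤ K := by linarith
    have hD0 : (0:ℝ) ≤ D := by linarith
    have hkey : (0:ℝ) ≤ K ^ 2 * D * ((2 * K + 1) * (K - 1)) :=
      mul_nonneg (mul_nonneg (sq_nonneg K) hD0)
        (mul_nonneg (by linarith) (by linarith))
    nlinarith [hkey]
  calc ‖x - ∑ n ∈ Λ, a n • e n‖
      ≤ ‖y‖ + ‖∑ n ∈ B, a n • e n‖ + ‖∑ n ∈ Γ, a n • e n‖ := hnorm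
    _ ≤ ‖y‖ + K * ‖y‖ + 4 * K ^ 2 * (1 + K) * D * ‖y‖ := by linarith
    _ ≤ (8 * K ^ 4 * D + K + 1) * ‖y‖ := by nlinarith [hy0, hcon]
end

section
/- A normalized basis of a real Banach space is w-almost greedy (for some constant) if and only if it is both quasi-greedy and w-democratic. -/
open Finset Filter

section Aux

variable {X : Type*} [NormedAddCommGroup X] [NormedSpace ℝ X]
variable {e : ℕ → X} {E : ℕ → X →L[ℝ] ℝ}

/-- biorthogonality computes coefficients of finite linear combinations. -/
lemma coef_sum (hb : ∀ n m, E n (e m) = if n = m then (1:ℝ) else 0)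
    (S : Finset ℕ) (c : ℕ → ℝ) (k : ℕ) :
    E k (∑ n ∈ S, c n • e n) = if k ∈ S then c k else 0 := by
  rw [map_sum]
  have : ∀ n ∈ S, E k (c n • e n) = if k = n then c n else 0 := by
    intro n _
    rw [map_smul, hb k n, smul_eq_mul]
    split <;> simp
  rw [Finset.sum_congr rfl this, Finset.sum_ite_eq]

lemma qg_max {K : ℝ} (hq : QuasiGreedy e E K) : QuasiGreedy e E (max K 0) := by
  intro x Λ h
  exact (hq x Λ h).trans (mul_le_mul_of_nonneg_right (le_max_left _ _) (norm_nonneg x))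

/-- comparison of two sign combinations over the same set, for quasi-greedy bases. -/
lemma sign_compare (hb : ∀ n m, E n (e m) = if n = m then (1:ℝ) else 0)
    {K : ℝ} (hq : QuasiGreedy e E K) (B : Finset ℕ) (ε δ : ℕ → ℝ)
    (hε : ∀ n ∈ B, ε n = 1 ∨ ε n = -1) (hδ : ∀ n ∈ B, δ n = 1 ∨ δ n = -1) :
    ‖∑ n ∈ B, ε n • e n‖ ≤ 2 * K * ‖∑ n ∈ B, δ n • e n‖ := by
  classical
  set z := ∑ n ∈ B, δ n • e n with hz
  have hcoef : ∀ k, E k z = if k ∈ B then δ k else 0 := fun k => coef_sum hb B δ k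
  have key : ∀ T : Finset ℕ, T ⊆ B → ‖∑ n ∈ T, δ n • e n‖ ≤ K * ‖z‖ := by
    intro T hT
    have hg : GreedySet E z T := by
      intro n hn k hk
      rw [hcoef, hcoef, if_pos (hT hn)]
      have h1 : |δ n| = 1 := by rcases hδ n (hT hn) with h|h <;> simp [h]
      rw [h1]
      split
      · rcases hδ k (by assumption) with h|h <;> simp [h]
      · simp
    have h := hq z T hg
    have : ∑ n ∈ T, E n z • e n = ∑ n ∈ T, δ n • e n := by
      apply Finset.sum_congr rfl
      intro n hn
      rw [hcoef, if_pos (hT hn)]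
    rwa [this] at h
  set S := B.filter (fun n => ε n = δ n) with hS
  have hsplit : ∑ n ∈ B, ε n • e n = (∑ n ∈ S, δ n • e n) - ∑ n ∈ B \ S, δ n • e n := by
    have hBS : B \ S = B.filter (fun n => ¬ ε n = δ n) := by
      rw [hS]
      ext n
      simp only [Finset.mem_sdiff, Finset.mem_filter]
      tauto
    have h1 : ∑ n ∈ B, ε n • e n = ∑ n ∈ S, ε n • e n + ∑ n ∈ B \ S, ε n • e n := by
      rw [hS, hBS]
      exact (Finset.sum_filter_add_sum_filter_not B (fun n => ε n = δ n) _).symm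
    rw [h1]
    have h2 : ∑ n ∈ S, ε n • e n = ∑ n ∈ S, δ n • e n := by
      apply Finset.sum_congr rfl
      intro n hn
      rw [Finset.mem_filter] at hn
      rw [hn.2]
    have h3 : ∑ n ∈ B \ S, ε n • e n = -∑ n ∈ B \ S, δ n • e n := by
      rw [← Finset.sum_neg_distrib]
      apply Finset.sum_congr rfl
      intro n hn
      rw [Finset.mem_sdiff, hS, Finset.mem_filter] at hn
      have hne : ε n ≠ δ n := fun h => hn.2 ⟨hn.1, h⟩
      have : ε n = -δ n := by
        rcases hε n hn.1 with h|h <;> rcases hδ n hn.1 with h'|h' <;>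
          simp [h, h'] at hne ⊢ <;> exact hne (by linarith)
      rw [this, neg_smul]
    rw [h2, h3]
    abel
  rw [hsplit]
  calc ‖(∑ n ∈ S, δ n • e n) - ∑ n ∈ B \ S, δ n • e n‖
      ≤ ‖∑ n ∈ S, δ n • e n‖ + ‖∑ n ∈ B \ S, δ n • e n‖ := norm_sub_le _ _
    _ ≤ K * ‖z‖ + K * ‖z‖ := add_le_add (key S (Finset.filter_subset _ _))
        (key (B \ S) (Finset.sdiff_subset))
    _ = 2 * K * ‖z‖ := by ring

/-- Abel-summation step for the truncation lemma. -/
lemma trunc_aux (hb : ∀ n m, E n (e m) = if n = m then (1:ℝ) else 0)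
    {K : ℝ} (hK : 0 ≤ K) (hq : QuasiGreedy e E K) (x : X) :
    ∀ Γ : Finset ℕ, GreedySet E x Γ → (∀ n ∈ Γ, E n x ≠ 0) →
    ∀ n₀ ∈ Γ, (∀ n ∈ Γ, |E n₀ x| ≤ |E n x|) →
    ‖(∑ n ∈ Γ, (E n x / |E n x|) • e n) - |E n₀ x|⁻¹ • ∑ n ∈ Γ, E n x • e n‖
      ≤ |E n₀ x|⁻¹ * (K * ‖x‖) := by
  classical
  intro Γ
  induction Γ using Finset.strongInduction with
  | _ Γ ih =>
    intro hg hnz n₀ hn₀ hmin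
    have hm0 : (0:ℝ) < |E n₀ x| := abs_pos.mpr (hnz n₀ hn₀)
    by_cases h1 : Γ.erase n₀ = ∅
    · have hsing : Γ = {n₀} := by
        apply Finset.eq_singleton_iff_unique_mem.mpr
        refine ⟨hn₀, fun y hy => ?_⟩
        by_contra hne
        exact absurd (Finset.mem_erase.mpr ⟨hne, hy⟩) (by simp [h1])
      subst hsing
      simp only [Finset.sum_singleton]
      have : (E n₀ x / |E n₀ x|) • e n₀ - |E n₀ x|⁻¹ • E n₀ x • e n₀ = 0 := by
        rw [smul_smul, div_eq_inv_mul]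
        abel
      rw [this, norm_zero]
      positivity
    · have hne' : (Γ.erase n₀).Nonempty := Finset.nonempty_iff_ne_empty.mpr h1
      obtain ⟨n₁, hn₁, hmin₁⟩ := Finset.exists_min_image (Γ.erase n₀) (fun n => |E n x|) hne'
      have hsub : Γ.erase n₀ ⊂ Γ := Finset.erase_ssubset hn₀
      have hg' : GreedySet E x (Γ.erase n₀) := by
        intro n hn k hk
        by_cases hkn : k = n₀
        · subst hkn; exact hmin n (Finset.mem_of_mem_erase hn)
        · by_cases hkΓ : k ∈ Γ
          · exact absurd (Finset.mem_erase.mpr ⟨hkn, hkΓ⟩) hk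
          · exact hg n (Finset.mem_of_mem_erase hn) k hkΓ
      have IH := ih (Γ.erase n₀) hsub hg'
        (fun n hn => hnz n (Finset.mem_of_mem_erase hn)) n₁ hn₁ hmin₁
      have hm1 : (0:ℝ) < |E n₁ x| := abs_pos.mpr (hnz n₁ (Finset.mem_of_mem_erase hn₁))
      have hmm : |E n₀ x| ≤ |E n₁ x| := hmin n₁ (Finset.mem_of_mem_erase hn₁)
      have hP' : ‖∑ n ∈ Γ.erase n₀, E n x • e n‖ ≤ K * ‖x‖ := hq x _ hg'
      have e1 : ∑ n ∈ Γ, (E n x / |E n x|) • e n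
          = (∑ n ∈ Γ.erase n₀, (E n x / |E n x|) • e n) + (E n₀ x / |E n₀ x|) • e n₀ :=
        (Finset.sum_erase_add Γ _ hn₀).symm
      have e2 : ∑ n ∈ Γ, E n x • e n
          = (∑ n ∈ Γ.erase n₀, E n x • e n) + E n₀ x • e n₀ :=
        (Finset.sum_erase_add Γ _ hn₀).symm
      have e3 : (E n₀ x / |E n₀ x|) • e n₀ = |E n₀ x|⁻¹ • (E n₀ x • e n₀) := by
        rw [smul_smul, div_eq_inv_mul]
      have e4 : (∑ n ∈ Γ, (E n x / |E n x|) • e n) - |E n₀ x|⁻¹ • ∑ n ∈ Γ, E n x • e n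
          = ((∑ n ∈ Γ.erase n₀, (E n x / |E n x|) • e n)
              - |E n₁ x|⁻¹ • ∑ n ∈ Γ.erase n₀, E n x • e n)
            + (|E n₁ x|⁻¹ - |E n₀ x|⁻¹) • ∑ n ∈ Γ.erase n₀, E n x • e n := by
        rw [e1, e2, e3, smul_add, sub_smul]
        abel
      rw [e4]
      have hcoe : |(|E n₁ x|⁻¹ - |E n₀ x|⁻¹)| = |E n₀ x|⁻¹ - |E n₁ x|⁻¹ := by
        rw [abs_sub_comm, abs_of_nonneg]
        have := inv_anti₀ hm0 hmm
        linarith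
      calc ‖_ + _‖ ≤ ‖(∑ n ∈ Γ.erase n₀, (E n x / |E n x|) • e n)
              - |E n₁ x|⁻¹ • ∑ n ∈ Γ.erase n₀, E n x • e n‖
            + ‖(|E n₁ x|⁻¹ - |E n₀ x|⁻¹) • ∑ n ∈ Γ.erase n₀, E n x • e n‖ := norm_add_le _ _
        _ ≤ |E n₁ x|⁻¹ * (K * ‖x‖)
            + (|E n₀ x|⁻¹ - |E n₁ x|⁻¹) * (K * ‖x‖) := by
            apply add_le_add IH
            rw [norm_smul, Real.norm_eq_abs, hcoe]
            have hnn : (0:ℝ) ≤ |E n₀ x|⁻¹ - |E n₁ x|⁻¹ := by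
              have := inv_anti₀ hm0 hmm
              linarith
            exact mul_le_mul_of_nonneg_left hP' hnn
        _ = |E n₀ x|⁻¹ * (K * ‖x‖) := by ring

/-- the truncation lemma: quasi-greedy bases uniformly bound sign-sums over greedy sets. -/
lemma truncation (hb : ∀ n m, E n (e m) = if n = m then (1:ℝ) else 0)
    {K : ℝ} (hK : 0 ≤ K) (hq : QuasiGreedy e E K) (x : X)
    (Γ : Finset ℕ) (hg : GreedySet E x Γ) (hnz : ∀ n ∈ Γ, E n x ≠ 0)
    (n₀ : ℕ) (hn₀ : n₀ ∈ Γ) (hmin : ∀ n ∈ Γ, |E n₀ x| ≤ |E n x|) :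
    |E n₀ x| * ‖∑ n ∈ Γ, (E n x / |E n x|) • e n‖ ≤ 2 * K * ‖x‖ := by
  have hm0 : (0:ℝ) < |E n₀ x| := abs_pos.mpr (hnz n₀ hn₀)
  have h1 := trunc_aux hb hK hq x Γ hg hnz n₀ hn₀ hmin
  have h2 : ‖∑ n ∈ Γ, (E n x / |E n x|) • e n‖
      ≤ |E n₀ x|⁻¹ * (K * ‖x‖) + |E n₀ x|⁻¹ * (K * ‖x‖) := by
    have h3 : ‖|E n₀ x|⁻¹ • ∑ n ∈ Γ, E n x • e n‖ ≤ |E n₀ x|⁻¹ * (K * ‖x‖) := by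
      rw [norm_smul, Real.norm_eq_abs, abs_of_nonneg (by positivity)]
      exact mul_le_mul_of_nonneg_left (hq x Γ hg) (by positivity)
    calc ‖∑ n ∈ Γ, (E n x / |E n x|) • e n‖
        ≤ ‖(∑ n ∈ Γ, (E n x / |E n x|) • e n) - |E n₀ x|⁻¹ • ∑ n ∈ Γ, E n x • e n‖
          + ‖|E n₀ x|⁻¹ • ∑ n ∈ Γ, E n x • e n‖ := by
          have := norm_add_le ((∑ n ∈ Γ, (E n x / |E n x|) • e n)
            - |E n₀ x|⁻¹ • ∑ n ∈ Γ, E n x • e n) (|E n₀ x|⁻¹ • ∑ n ∈ Γ, E n x • e n)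
          simpa using this
      _ ≤ _ := add_le_add h1 h3
  have := mul_le_mul_of_nonneg_left h2 hm0.le
  calc |E n₀ x| * ‖∑ n ∈ Γ, (E n x / |E n x|) • e n‖
      ≤ |E n₀ x| * (|E n₀ x|⁻¹ * (K * ‖x‖) + |E n₀ x|⁻¹ * (K * ‖x‖)) := this
    _ = (|E n₀ x| * |E n₀ x|⁻¹) * (2 * (K * ‖x‖)) := by ring
    _ = 2 * K * ‖x‖ := by rw [mul_inv_cancel₀ (ne_of_gt hm0)]; ring

/-- convexity: a coefficient in `[-t,t]` is dominated by an extreme one. -/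
lemma conv_bound (u v : X) {s t : ℝ} (ht : 0 < t) (hs : |s| ≤ t) :
    ‖u + s • v‖ ≤ max ‖u + t • v‖ ‖u - t • v‖ := by
  set lam := (s + t) / (2 * t) with hlam
  have h0 : 0 ≤ lam := by
    rw [hlam]
    have hab := abs_le.mp hs
    apply div_nonneg <;> linarith
  have h1 : lam ≤ 1 := by
    rw [hlam, div_le_one (by linarith)]
    have := abs_le.mp hs
    linarith
  have hid : u + s • v = lam • (u + t • v) + (1 - lam) • (u - t • v) := by
    have hco : s = lam * t - (1 - lam) * t := by
      rw [hlam]; field_simp; ring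
    rw [hco]
    module
  rw [hid]
  calc ‖lam • (u + t • v) + (1 - lam) • (u - t • v)‖
      ≤ lam * ‖u + t • v‖ + (1 - lam) * ‖u - t • v‖ := by
        refine (norm_add_le _ _).trans ?_
        rw [norm_smul, norm_smul, Real.norm_eq_abs, Real.norm_eq_abs,
          abs_of_nonneg h0, abs_of_nonneg (by linarith)]
    _ ≤ lam * max ‖u + t • v‖ ‖u - t • v‖ + (1 - lam) * max ‖u + t • v‖ ‖u - t • v‖ := by
        apply add_le_add
        · exact mul_le_mul_of_nonneg_left (le_max_left _ _) h0
        · exact mul_le_mul_of_nonneg_left (le_max_right _ _) (by linarith)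
    _ = max ‖u + t • v‖ ‖u - t • v‖ := by ring

/-- replacing small coefficients by extreme signs only increases the norm. -/
lemma exists_sign {t : ℝ} (ht : 0 < t) :
    ∀ B : Finset ℕ, ∀ v : X, ∀ a : ℕ → ℝ, (∀ n ∈ B, |a n| ≤ t) →
      ∃ ε : ℕ → ℝ, (∀ n, ε n = 1 ∨ ε n = -1) ∧
        ‖v + ∑ n ∈ B, a n • e n‖ ≤ ‖v + ∑ n ∈ B, (t * ε n) • e n‖ := by
  classical
  intro B
  induction B using Finset.induction_on with
  | empty =>
    intro v a _
    exact ⟨fun _ => 1, fun _ => Or.inl rfl, by simp⟩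
  | @insert n₀ B' hn₀ ih =>
    intro v a ha
    obtain ⟨ε', hε', hb'⟩ := ih (v + a n₀ • e n₀) a (fun n hn => ha n (Finset.mem_insert_of_mem hn))
    set u := v + ∑ n ∈ B', (t * ε' n) • e n with hu
    have hconv : ‖u + a n₀ • e n₀‖ ≤ max ‖u + t • e n₀‖ ‖u - t • e n₀‖ :=
      conv_bound u (e n₀) ht (ha n₀ (Finset.mem_insert_self _ _))
    have hstep : ‖v + ∑ n ∈ insert n₀ B', a n • e n‖ ≤ ‖u + a n₀ • e n₀‖ := by
      rw [Finset.sum_insert hn₀]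
      calc ‖v + (a n₀ • e n₀ + ∑ n ∈ B', a n • e n)‖
          = ‖(v + a n₀ • e n₀) + ∑ n ∈ B', a n • e n‖ := by rw [add_assoc]
        _ ≤ ‖(v + a n₀ • e n₀) + ∑ n ∈ B', (t * ε' n) • e n‖ := hb'
        _ = ‖u + a n₀ • e n₀‖ := by rw [hu]; congr 1; abel
    rcases le_max_iff.mp hconv with h|h
    · refine ⟨Function.update ε' n₀ 1, ?_, ?_⟩
      · intro n
        by_cases hn : n = n₀
        · subst hn; simp
        · rw [Function.update_of_ne hn]; exact hε' n
      · have hrw : ∑ n ∈ B', (t * Function.update ε' n₀ 1 n) • e n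
            = ∑ n ∈ B', (t * ε' n) • e n := by
          apply Finset.sum_congr rfl
          intro n hn
          have hne : n ≠ n₀ := by rintro rfl; exact hn₀ hn
          rw [Function.update_of_ne hne]
        have hfin : v + ∑ n ∈ insert n₀ B', (t * Function.update ε' n₀ 1 n) • e n
            = u + t • e n₀ := by
          rw [Finset.sum_insert hn₀, hrw, Function.update_self, hu, mul_one]
          abel
        calc ‖v + ∑ n ∈ insert n₀ B', a n • e n‖ ≤ ‖u + t • e n₀‖ := hstep.trans h
          _ = ‖v + ∑ n ∈ insert n₀ B', (t * Function.update ε' n₀ 1 n) • e n‖ := by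
            rw [hfin]
    · refine ⟨Function.update ε' n₀ (-1), ?_, ?_⟩
      · intro n
        by_cases hn : n = n₀
        · subst hn; simp
        · rw [Function.update_of_ne hn]; exact hε' n
      · have hrw : ∑ n ∈ B', (t * Function.update ε' n₀ (-1) n) • e n
            = ∑ n ∈ B', (t * ε' n) • e n := by
          apply Finset.sum_congr rfl
          intro n hn
          have hne : n ≠ n₀ := by rintro rfl; exact hn₀ hn
          rw [Function.update_of_ne hne]
        have hfin : v + ∑ n ∈ insert n₀ B', (t * Function.update ε' n₀ (-1) n) • e n
            = u - t • e n₀ := by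
          rw [Finset.sum_insert hn₀, hrw, Function.update_self, hu,
            show (t * (-1)) • e n₀ = -(t • e n₀) by rw [mul_neg_one, neg_smul]]
          abel
        calc ‖v + ∑ n ∈ insert n₀ B', a n • e n‖ ≤ ‖u - t • e n₀‖ := hstep.trans h
          _ = ‖v + ∑ n ∈ insert n₀ B', (t * Function.update ε' n₀ (-1) n) • e n‖ := by
            rw [hfin]

/-- small-coefficient combinations are bounded by the corresponding indicator sum. -/
lemma small_coeff_bound (hb : ∀ n m, E n (e m) = if n = m then (1:ℝ) else 0)
    {K : ℝ} (hK : 0 ≤ K) (hq : QuasiGreedy e E K) (B : Finset ℕ)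
    {t : ℝ} (ht : 0 ≤ t) (a : ℕ → ℝ) (ha : ∀ n ∈ B, |a n| ≤ t) :
    ‖∑ n ∈ B, a n • e n‖ ≤ 2 * K * t * ‖∑ n ∈ B, e n‖ := by
  rcases eq_or_lt_of_le ht with h|h
  · have : ∀ n ∈ B, a n • e n = 0 := by
      intro n hn
      have : a n = 0 := abs_nonpos_iff.mp (le_of_le_of_eq (ha n hn) h.symm)
      simp [this]
    rw [Finset.sum_eq_zero this, norm_zero]
    have : (0:ℝ) ≤ 2 * K * t * ‖∑ n ∈ B, e n‖ := by positivity
    linarith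
  · obtain ⟨ε, hε, hle⟩ := exists_sign (e := e) h B 0 a ha
    have h1 : ‖∑ n ∈ B, a n • e n‖ ≤ t * ‖∑ n ∈ B, ε n • e n‖ := by
      have h2 : ∑ n ∈ B, (t * ε n) • e n = t • ∑ n ∈ B, ε n • e n := by
        rw [Finset.smul_sum]
        apply Finset.sum_congr rfl
        intro n _
        rw [smul_smul]
      calc ‖∑ n ∈ B, a n • e n‖ = ‖(0:X) + ∑ n ∈ B, a n • e n‖ := by rw [zero_add]
        _ ≤ ‖(0:X) + ∑ n ∈ B, (t * ε n) • e n‖ := hle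
        _ = t * ‖∑ n ∈ B, ε n • e n‖ := by
            rw [zero_add, h2, norm_smul, Real.norm_eq_abs, abs_of_pos h]
    have h3 : ‖∑ n ∈ B, ε n • e n‖ ≤ 2 * K * ‖∑ n ∈ B, (1:ℝ) • e n‖ :=
      sign_compare hb hq B ε (fun _ => 1) (fun n _ => hε n) (fun _ _ => Or.inl rfl)
    have h4 : ∑ n ∈ B, (1:ℝ) • e n = ∑ n ∈ B, e n := by
      apply Finset.sum_congr rfl; intro n _; rw [one_smul]
    rw [h4] at h3
    calc ‖∑ n ∈ B, a n • e n‖ ≤ t * ‖∑ n ∈ B, ε n • e n‖ := h1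
      _ ≤ t * (2 * K * ‖∑ n ∈ B, e n‖) := mul_le_mul_of_nonneg_left h3 h.le
      _ = 2 * K * t * ‖∑ n ∈ B, e n‖ := by ring

end Aux

/-- a normalized basis of a real Banach space is `w`-almost greedy iff it is
quasi-greedy and `w`-democratic. -/
theorem stmt3 {X : Type*} [NormedAddCommGroup X] [NormedSpace ℝ X] [CompleteSpace X]
    (e : ℕ → X) (E : ℕ → X →L[ℝ] ℝ) (w : ℕ → ℝ)
    (hw : ∀ i, 0 < w i) (hb : NormalizedBasis e E) :
    (∃ K : ℝ, WAlmostGreedy w e E K) ↔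
      (∃ K : ℝ, QuasiGreedy e E K) ∧ (∃ D : ℝ, WDemocratic w e D) := by
  classical
  obtain ⟨hnorm, hbi, hconv⟩ := hb
  constructor
  · rintro ⟨K, hK⟩
    constructor
    · refine ⟨1 + K, ?_⟩
      intro x Λ hΛ
      have h0 : wsum w (∅ : Finset ℕ) ≤ wsum w Λ := by
        simp only [wsum, Finset.sum_empty]
        exact Finset.sum_nonneg (fun i _ => (hw i).le)
      have h := hK x Λ hΛ ∅ h0
      simp only [Finset.sum_empty, sub_zero] at h
      calc ‖∑ n ∈ Λ, E n x • e n‖ = ‖x - (x - ∑ n ∈ Λ, E n x • e n)‖ := by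
            rw [sub_sub_cancel]
        _ ≤ ‖x‖ + ‖x - ∑ n ∈ Λ, E n x • e n‖ := norm_sub_le _ _
        _ ≤ ‖x‖ + K * ‖x‖ := by linarith
        _ = (1 + K) * ‖x‖ := by ring
    · refine ⟨3 * K + 1, ?_⟩
      intro A B hAB
      set x := (∑ n ∈ A \ B, e n) + ∑ n ∈ B, (2:ℝ) • e n with hxdef
      have hco : ∀ k, E k x
          = (if k ∈ A \ B then (1:ℝ) else 0) + (if k ∈ B then 2 else 0) := by
        intro k
        rw [hxdef, map_add]
        have h1 : E k (∑ n ∈ A \ B, e n) = if k ∈ A \ B then (1:ℝ) else 0 := by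
          rw [show (∑ n ∈ A \ B, e n) = ∑ n ∈ A \ B, (fun _ => (1:ℝ)) n • e n by simp]
          exact coef_sum hbi _ _ k
        have h2 : E k (∑ n ∈ B, (2:ℝ) • e n) = if k ∈ B then (2:ℝ) else 0 :=
          coef_sum hbi B (fun _ => (2:ℝ)) k
        rw [h1, h2]
      have hgB : GreedySet E x B := by
        intro n hn k hk
        rw [hco k, hco n, if_neg (by simp [Finset.mem_sdiff, hn] : n ∉ A \ B),
          if_pos hn, if_neg hk]
        split <;> norm_num
      have hw1 : wsum w (A \ B) ≤ wsum w B := by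
        refine le_trans ?_ hAB
        exact Finset.sum_le_sum_of_subset_of_nonneg Finset.sdiff_subset
          (fun i _ _ => (hw i).le)
      have happrox := hK x B hgB (A \ B) hw1
      have hPB : ∑ n ∈ B, E n x • e n = ∑ n ∈ B, (2:ℝ) • e n := by
        refine Finset.sum_congr rfl (fun n hn => ?_)
        rw [hco n, if_neg (by simp [Finset.mem_sdiff, hn] : n ∉ A \ B), if_pos hn]
        norm_num
      have hPA : ∑ n ∈ A \ B, E n x • e n = ∑ n ∈ A \ B, e n := by
        refine Finset.sum_congr rfl (fun n hn => ?_)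
        have : E n x = 1 := by
          rw [hco n, if_pos hn, if_neg (Finset.mem_sdiff.mp hn).2]
          norm_num
        rw [this, one_smul]
      have hsub1 : x - ∑ n ∈ B, E n x • e n = ∑ n ∈ A \ B, e n := by
        rw [hPB, hxdef]; abel
      have hsub2 : x - ∑ n ∈ A \ B, E n x • e n = ∑ n ∈ B, (2:ℝ) • e n := by
        rw [hPA, hxdef]; abel
      have h2norm : ‖∑ n ∈ B, (2:ℝ) • e n‖ = 2 * ‖∑ n ∈ B, e n‖ := by
        rw [← Finset.smul_sum, norm_smul, Real.norm_eq_abs]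
        norm_num
      have hfin1 : ‖∑ n ∈ A \ B, e n‖ ≤ K * (2 * ‖∑ n ∈ B, e n‖) := by
        calc ‖∑ n ∈ A \ B, e n‖ = ‖x - ∑ n ∈ B, E n x • e n‖ := by rw [hsub1]
          _ ≤ K * ‖x - ∑ n ∈ A \ B, E n x • e n‖ := happrox
          _ = K * (2 * ‖∑ n ∈ B, e n‖) := by rw [hsub2, h2norm]
      -- second part : the intersection
      set z := ∑ n ∈ B, e n with hzdef
      have hcoz : ∀ k, E k z = if k ∈ B then (1:ℝ) else 0 := by
        intro k
        rw [hzdef, show (∑ n ∈ B, e n) = ∑ n ∈ B, (fun _ => (1:ℝ)) n • e n by simp]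
        exact coef_sum hbi _ _ k
      have hgz : GreedySet E z (A ∩ B) := by
        intro n hn k hk
        rw [hcoz, hcoz, if_pos (Finset.mem_inter.mp hn).2]
        split <;> norm_num
      have h0' : wsum w (∅ : Finset ℕ) ≤ wsum w (A ∩ B) := by
        simp only [wsum, Finset.sum_empty]
        exact Finset.sum_nonneg (fun i _ => (hw i).le)
      have h := hK z (A ∩ B) hgz ∅ h0'
      simp only [Finset.sum_empty, sub_zero] at h
      have hPAB : ∑ n ∈ A ∩ B, E n z • e n = ∑ n ∈ A ∩ B, e n := by
        refine Finset.sum_congr rfl (fun n hn => ?_)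
        rw [hcoz, if_pos (Finset.mem_inter.mp hn).2, one_smul]
      rw [hPAB] at h
      have hfin2 : ‖∑ n ∈ A ∩ B, e n‖ ≤ (1 + K) * ‖z‖ := by
        calc ‖∑ n ∈ A ∩ B, e n‖ = ‖z - (z - ∑ n ∈ A ∩ B, e n)‖ := by rw [sub_sub_cancel]
          _ ≤ ‖z‖ + ‖z - ∑ n ∈ A ∩ B, e n‖ := norm_sub_le _ _
          _ ≤ ‖z‖ + K * ‖z‖ := by linarith
          _ = (1 + K) * ‖z‖ := by ring
      have hsum : (∑ n ∈ A ∩ B, e n) + ∑ n ∈ A \ B, e n = ∑ n ∈ A, e n :=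
        Finset.sum_inter_add_sum_sdiff A B e
      calc ‖∑ n ∈ A, e n‖ = ‖(∑ n ∈ A ∩ B, e n) + ∑ n ∈ A \ B, e n‖ := by rw [hsum]
        _ ≤ ‖∑ n ∈ A ∩ B, e n‖ + ‖∑ n ∈ A \ B, e n‖ := norm_add_le _ _
        _ ≤ (1 + K) * ‖z‖ + K * (2 * ‖z‖) := add_le_add hfin2 hfin1
        _ = (3 * K + 1) * ‖z‖ := by ring
  · rintro ⟨⟨K₀, hq₀⟩, ⟨D₀, hd₀⟩⟩
    set K := max K₀ 0 with hKdef
    have hq : QuasiGreedy e E K := qg_max hq₀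
    have hK : (0:ℝ) ≤ K := le_max_right _ _
    set D := max D₀ 0 with hDdef
    have hD : (0:ℝ) ≤ D := le_max_right _ _
    have hd : WDemocratic w e D := fun A B h => (hd₀ A B h).trans
      (mul_le_mul_of_nonneg_right (le_max_left _ _) (norm_nonneg _))
    refine ⟨1 + K + 8 * K ^ 3 * D, ?_⟩
    intro x Λ hΛ A hA
    set y := x - ∑ n ∈ A, E n x • e n with hy
    have hyc : ∀ k, E k y = if k ∈ A then 0 else E k x := by
      intro k
      rw [hy, map_sub, coef_sum hbi]
      split <;> simp
    have hΛA : ∑ n ∈ Λ \ A, E n y • e n = ∑ n ∈ Λ \ A, E n x • e n := by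
      refine Finset.sum_congr rfl (fun n hn => ?_)
      rw [hyc, if_neg (Finset.mem_sdiff.mp hn).2]
    have hdec : x - ∑ n ∈ Λ, E n x • e n
        = (y - ∑ n ∈ Λ \ A, E n y • e n) + ∑ n ∈ A \ Λ, E n x • e n := by
      rw [hΛA, hy]
      have h1 : (∑ n ∈ A ∩ Λ, E n x • e n) + ∑ n ∈ A \ Λ, E n x • e n
          = ∑ n ∈ A, E n x • e n := Finset.sum_inter_add_sum_sdiff A Λ _
      have h2 : (∑ n ∈ Λ ∩ A, E n x • e n) + ∑ n ∈ Λ \ A, E n x • e n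
          = ∑ n ∈ Λ, E n x • e n := Finset.sum_inter_add_sum_sdiff Λ A _
      have h3 : Λ ∩ A = A ∩ Λ := Finset.inter_comm Λ A
      rw [h3] at h2
      rw [← h1, ← h2]
      abel
    have hg1 : GreedySet E y (Λ \ A) := by
      intro n hn k hk
      have hn' := Finset.mem_sdiff.mp hn
      rw [hyc, hyc, if_neg hn'.2]
      by_cases hkA : k ∈ A
      · rw [if_pos hkA]
        simp [abs_nonneg]
      · rw [if_neg hkA]
        by_cases hkΛ : k ∈ Λ
        · exact absurd (Finset.mem_sdiff.mpr ⟨hkΛ, hkA⟩) hk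
        · exact hΛ n hn'.1 k hkΛ
    have hstep1 : ‖y - ∑ n ∈ Λ \ A, E n y • e n‖ ≤ (1 + K) * ‖y‖ := by
      have h := hq y (Λ \ A) hg1
      calc ‖y - ∑ n ∈ Λ \ A, E n y • e n‖
          ≤ ‖y‖ + ‖∑ n ∈ Λ \ A, E n y • e n‖ := norm_sub_le _ _
        _ ≤ ‖y‖ + K * ‖y‖ := by linarith
        _ = (1 + K) * ‖y‖ := by ring
    have hww : wsum w (A \ Λ) ≤ wsum w (Λ \ A) := by
      have h1 := Finset.sum_inter_add_sum_sdiff A Λ w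
      have h2 := Finset.sum_inter_add_sum_sdiff Λ A w
      have h3 : ∑ i ∈ A ∩ Λ, w i = ∑ i ∈ Λ ∩ A, w i := by rw [Finset.inter_comm]
      simp only [wsum] at hA ⊢
      linarith
    have h8 : (0:ℝ) ≤ 8 * K ^ 3 * D :=
      mul_nonneg (mul_nonneg (by norm_num) (pow_nonneg hK 3)) hD
    have hstep2 : ‖∑ n ∈ A \ Λ, E n x • e n‖ ≤ 8 * K ^ 3 * D * ‖y‖ := by
      by_cases hAL : (A \ Λ) = ∅
      · rw [hAL, Finset.sum_empty, norm_zero]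
        exact mul_nonneg h8 (norm_nonneg y)
      · have hALne : (A \ Λ).Nonempty := Finset.nonempty_iff_ne_empty.mpr hAL
        have hLAne : (Λ \ A).Nonempty := by
          by_contra h
          rw [Finset.not_nonempty_iff_eq_empty] at h
          have hpos : 0 < wsum w (A \ Λ) :=
            Finset.sum_pos (fun i _ => hw i) hALne
          rw [h] at hww
          simp only [wsum, Finset.sum_empty] at hww hpos
          linarith
        obtain ⟨n₀, hn₀, hminn⟩ := Finset.exists_min_image (Λ \ A) (fun n => |E n x|) hLAne
        set m := |E n₀ x| with hm
        have hm0 : (0:ℝ) ≤ m := abs_nonneg _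
        have hsmall : ∀ n ∈ A \ Λ, |E n x| ≤ m := fun n hn =>
          hΛ n₀ (Finset.mem_sdiff.mp hn₀).1 n (Finset.mem_sdiff.mp hn).2
        have hB := small_coeff_bound hbi hK hq (A \ Λ) hm0 (fun n => E n x) hsmall
        have hdem : ‖∑ n ∈ A \ Λ, e n‖ ≤ D * ‖∑ n ∈ Λ \ A, e n‖ := hd _ _ hww
        by_cases hm' : m = 0
        · have hz : ∀ n ∈ A \ Λ, E n x • e n = 0 := by
            intro n hn
            have h1 := hsmall n hn
            rw [hm'] at h1
            have : E n x = 0 := abs_nonpos_iff.mp h1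
            simp [this]
          rw [Finset.sum_eq_zero hz, norm_zero]
          exact mul_nonneg h8 (norm_nonneg y)
        · have hmpos : (0:ℝ) < m := lt_of_le_of_ne hm0 (Ne.symm hm')
          have hyeq : ∀ n ∈ Λ \ A, E n y = E n x := fun n hn => by
            rw [hyc, if_neg (Finset.mem_sdiff.mp hn).2]
          have hnz : ∀ n ∈ Λ \ A, E n y ≠ 0 := by
            intro n hn h
            have h2 : E n x = 0 := by rw [← hyeq n hn]; exact h
            have h1 := hminn n hn
            rw [h2] at h1
            simp only [abs_zero] at h1
            linarith
          have hminy : ∀ n ∈ Λ \ A, |E n₀ y| ≤ |E n y| := by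
            intro n hn
            rw [hyeq n hn, hyeq n₀ hn₀]
            exact hminn n hn
          have hn₀y : |E n₀ y| = m := by rw [hyeq n₀ hn₀]
          have htr := truncation hbi hK hq y (Λ \ A) hg1 hnz n₀ hn₀ hminy
          rw [hn₀y] at htr
          have hsgn : ∀ n ∈ Λ \ A, E n y / |E n y| = 1 ∨ E n y / |E n y| = -1 := by
            intro n hn
            have h := hnz n hn
            rcases abs_cases (E n y) with ⟨h1, _⟩ | ⟨h1, _⟩
            · left; rw [h1, div_self h]
            · right; rw [h1, div_neg, div_self h]
          have hcomp : ‖∑ n ∈ Λ \ A, (1:ℝ) • e n‖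
              ≤ 2 * K * ‖∑ n ∈ Λ \ A, (E n y / |E n y|) • e n‖ :=
            sign_compare hbi hq (Λ \ A) (fun _ => 1) (fun n => E n y / |E n y|)
              (fun _ _ => Or.inl rfl) hsgn
          have h1e : ∑ n ∈ Λ \ A, (1:ℝ) • e n = ∑ n ∈ Λ \ A, e n := by simp
          rw [h1e] at hcomp
          have hnn1 : (0:ℝ) ≤ 2 * K * m := by positivity
          have hnn2 : (0:ℝ) ≤ 4 * K ^ 2 * D :=
            mul_nonneg (mul_nonneg (by norm_num) (sq_nonneg K)) hD
          calc ‖∑ n ∈ A \ Λ, E n x • e n‖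
              ≤ 2 * K * m * ‖∑ n ∈ A \ Λ, e n‖ := hB
            _ ≤ 2 * K * m * (D * ‖∑ n ∈ Λ \ A, e n‖) :=
                mul_le_mul_of_nonneg_left hdem hnn1
            _ ≤ 2 * K * m * (D * (2 * K * ‖∑ n ∈ Λ \ A, (E n y / |E n y|) • e n‖)) :=
                mul_le_mul_of_nonneg_left (mul_le_mul_of_nonneg_left hcomp hD) hnn1
            _ = 4 * K ^ 2 * D * (m * ‖∑ n ∈ Λ \ A, (E n y / |E n y|) • e n‖) := by ring
            _ ≤ 4 * K ^ 2 * D * (2 * K * ‖y‖) := mul_le_mul_of_nonneg_left htr hnn2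
            _ = 8 * K ^ 3 * D * ‖y‖ := by ring
    calc ‖x - ∑ n ∈ Λ, E n x • e n‖
        = ‖(y - ∑ n ∈ Λ \ A, E n y • e n) + ∑ n ∈ A \ Λ, E n x • e n‖ := by rw [hdec]
      _ ≤ ‖y - ∑ n ∈ Λ \ A, E n y • e n‖ + ‖∑ n ∈ A \ Λ, E n x • e n‖ := norm_add_le _ _
      _ ≤ (1 + K) * ‖y‖ + 8 * K ^ 3 * D * ‖y‖ := add_le_add hstep1 hstep2
      _ = (1 + K + 8 * K ^ 3 * D) * ‖y‖ := by ring
end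

section
/- There exists a strictly monotone set function ν on finite subsets of ℕ with ν(∅)=0 satisfying the property (ν(A) ≤ ν(B) ⟹ ν(A\B) ≤ ν(B\A)) for which no weight sequence w of positive reals satisfies (ν(A) ≤ ν(B) ⟺ w(A) ≤ w(B)) for all finite A, B. -/
open Finset Filter

/-- the core integer-valued function on boolean triples (values scaled by 16). -/
def gAux : Bool → Bool → Bool → ℤ
  | false, false, false => 0
  | true, false, false => 4
  | false, true, false => 4
  | false, false, true => 4
  | true, true, false => 5
  | false, true, true => 6
  | true, false, true => 7
  | true, true, true => 8

def Sfin : Finset ℕ := {0, 1, 2}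

def nuQ (A : Finset ℕ) : ℤ :=
  gAux (decide (0 ∈ A)) (decide (1 ∈ A)) (decide (2 ∈ A)) + 16 * ((A \ Sfin).card : ℤ)

noncomputable def nuR (A : Finset ℕ) : ℝ := ((nuQ A : ℤ) : ℝ)

lemma gAux_bounds : ∀ a b c : Bool, 0 ≤ gAux a b c ∧ gAux a b c ≤ 8 := by decide

lemma gAux_mono : ∀ a0 a1 a2 b0 b1 b2 : Bool, a0 ≤ b0 → a1 ≤ b1 → a2 ≤ b2 →
    gAux a0 a1 a2 ≤ gAux b0 b1 b2 := by decide

lemma gAux_smono : ∀ a0 a1 a2 b0 b1 b2 : Bool, a0 ≤ b0 → a1 ≤ b1 → a2 ≤ b2 →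
    (a0 ≠ b0 ∨ a1 ≠ b1 ∨ a2 ≠ b2) → gAux a0 a1 a2 < gAux b0 b1 b2 := by decide

lemma gAux_key : ∀ a0 a1 a2 b0 b1 b2 : Bool, gAux a0 a1 a2 ≤ gAux b0 b1 b2 →
    gAux (a0 && !b0) (a1 && !b1) (a2 && !b2) ≤ gAux (b0 && !a0) (b1 && !a1) (b2 && !a2) := by
  decide

lemma decide_mono {p q : Prop} [Decidable p] [Decidable q] (h : p → q) :
    decide p ≤ decide q := by
  by_cases hp : p
  · simp [hp, h hp]
  · simp [hp]

lemma decide_sdiff (i : ℕ) (A B : Finset ℕ) :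
    decide (i ∈ A \ B) = (decide (i ∈ A) && !decide (i ∈ B)) := by
  simp [Finset.mem_sdiff]

lemma nuQ_strict_mono {A B : Finset ℕ} (h : A ⊂ B) : nuQ A < nuQ B := by
  have hAB : A ⊆ B := h.subset
  obtain ⟨x, hxB, hxA⟩ := Finset.exists_of_ssubset h
  have hd0 : decide (0 ∈ A) ≤ decide (0 ∈ B) := decide_mono (fun h => hAB h)
  have hd1 : decide (1 ∈ A) ≤ decide (1 ∈ B) := decide_mono (fun h => hAB h)
  have hd2 : decide (2 ∈ A) ≤ decide (2 ∈ B) := decide_mono (fun h => hAB h)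
  have hcard : ((A \ Sfin).card : ℤ) ≤ ((B \ Sfin).card : ℤ) := by
    exact_mod_cast Finset.card_le_card (Finset.sdiff_subset_sdiff hAB le_rfl)
  by_cases hxS : x ∈ Sfin
  · have hne : decide (0 ∈ A) ≠ decide (0 ∈ B) ∨ decide (1 ∈ A) ≠ decide (1 ∈ B) ∨
        decide (2 ∈ A) ≠ decide (2 ∈ B) := by
      have : x = 0 ∨ x = 1 ∨ x = 2 := by
        simpa [Sfin, Finset.mem_insert] using hxS
      rcases this with rfl | rfl | rfl
      · left; simp [hxA, hxB]
      · right; left; simp [hxA, hxB]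
      · right; right; simp [hxA, hxB]
    have := gAux_smono _ _ _ _ _ _ hd0 hd1 hd2 hne
    unfold nuQ; linarith
  · have hss : A \ Sfin ⊂ B \ Sfin := by
      refine ⟨Finset.sdiff_subset_sdiff hAB le_rfl, fun hc => ?_⟩
      exact hxA (Finset.mem_sdiff.mp (hc (Finset.mem_sdiff.mpr ⟨hxB, hxS⟩))).1
    have hcard' : ((A \ Sfin).card : ℤ) < ((B \ Sfin).card : ℤ) := by
      exact_mod_cast Finset.card_lt_card hss
    have := gAux_mono _ _ _ _ _ _ hd0 hd1 hd2
    unfold nuQ; linarith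

lemma sdiff_sdiff_S (A B : Finset ℕ) : (A \ B) \ Sfin = (A \ Sfin) \ (B \ Sfin) := by
  ext x; simp [Finset.mem_sdiff]; tauto

lemma nuQ_star {A B : Finset ℕ} (h : nuQ A ≤ nuQ B) : nuQ (A \ B) ≤ nuQ (B \ A) := by
  set u := ((A \ Sfin) \ (B \ Sfin)).card with hu
  set v := ((B \ Sfin) \ (A \ Sfin)).card with hv
  set t := ((A \ Sfin) ∩ (B \ Sfin)).card with ht
  have hAcard : (A \ Sfin).card = u + t := (Finset.card_sdiff_add_card_inter _ _).symm
  have hBcard : (B \ Sfin).card = v + t := by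
    rw [hv, ht, Finset.inter_comm]
    exact (Finset.card_sdiff_add_card_inter _ _).symm
  set a0 := decide (0 ∈ A); set a1 := decide (1 ∈ A); set a2 := decide (2 ∈ A)
  set b0 := decide (0 ∈ B); set b1 := decide (1 ∈ B); set b2 := decide (2 ∈ B)
  have hga := gAux_bounds a0 a1 a2
  have hgb := gAux_bounds b0 b1 b2
  have hg1 := gAux_bounds (a0 && !b0) (a1 && !b1) (a2 && !b2)
  have hg2 := gAux_bounds (b0 && !a0) (b1 && !a1) (b2 && !a2)
  have hyp : gAux a0 a1 a2 + 16 * (u : ℤ) ≤ gAux b0 b1 b2 + 16 * (v : ℤ) := by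
    have h' := h
    unfold nuQ at h'
    rw [hAcard, hBcard] at h'
    push_cast at h'
    linarith
  have hgoal : nuQ (A \ B) = gAux (a0 && !b0) (a1 && !b1) (a2 && !b2) + 16 * (u : ℤ) := by
    unfold nuQ
    rw [decide_sdiff, decide_sdiff, decide_sdiff, sdiff_sdiff_S]
  have hgoal' : nuQ (B \ A) = gAux (b0 && !a0) (b1 && !a1) (b2 && !a2) + 16 * (v : ℤ) := by
    unfold nuQ
    rw [decide_sdiff, decide_sdiff, decide_sdiff, sdiff_sdiff_S]
  rw [hgoal, hgoal']
  have huv : u ≤ v := by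
    by_contra hc
    push_neg at hc
    have : (v : ℤ) + 1 ≤ (u : ℤ) := by exact_mod_cast hc
    linarith
  rcases eq_or_lt_of_le huv with heq | hlt
  · have hle : gAux a0 a1 a2 ≤ gAux b0 b1 b2 := by
      rw [heq] at hyp; linarith
    have := gAux_key _ _ _ _ _ _ hle
    rw [heq]
    linarith
  · have : (u : ℤ) + 1 ≤ (v : ℤ) := by exact_mod_cast hlt
    linarith

lemma nuQ_vals : nuQ ∅ = 0 ∧ nuQ {0} = 4 ∧ nuQ {1} = 4 ∧ nuQ {2} = 4 ∧
    nuQ {0, 1} = 5 ∧ nuQ {1, 2} = 6 := by decide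

lemma nuR_le_iff (A B : Finset ℕ) : nuR A ≤ nuR B ↔ nuQ A ≤ nuQ B := Int.cast_le

/-- there is a strictly monotone set function `ν` with `ν ∅ = 0` having
property (*) that is not equivalent to any weight. -/
theorem stmt5 :
    ∃ ν : Finset ℕ → ℝ,
      ν ∅ = 0 ∧
      (∀ A B : Finset ℕ, A ⊂ B → ν A < ν B) ∧
      (∀ A B : Finset ℕ, ν A ≤ ν B → ν (A \ B) ≤ ν (B \ A)) ∧
      ¬ ∃ w : ℕ → ℝ, (∀ i, 0 < w i) ∧
        ∀ A B : Finset ℕ, (ν A ≤ ν B ↔ wsum w A ≤ wsum w B) := by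
  obtain ⟨h0, hs0, hs1, hs2, h01, h12⟩ := nuQ_vals
  refine ⟨nuR, by simp [nuR, h0],
    fun A B h => by exact Int.cast_lt.mpr (nuQ_strict_mono h),
    fun A B h => (nuR_le_iff _ _).mpr (nuQ_star ((nuR_le_iff _ _).mp h)), ?_⟩
  rintro ⟨w, -, hw⟩
  have cast_le : ∀ A B : Finset ℕ, nuQ A ≤ nuQ B ↔ wsum w A ≤ wsum w B := by
    intro A B
    rw [← hw A B]
    exact (nuR_le_iff A B).symm
  have w01 : wsum w {0} = wsum w {1} := by
    have h1 := (cast_le {0} {1}).mp (by rw [hs0, hs1])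
    have h2 := (cast_le {1} {0}).mp (by rw [hs0, hs1])
    linarith
  have w12 : wsum w {1} = wsum w {2} := by
    have h1 := (cast_le {1} {2}).mp (by rw [hs1, hs2])
    have h2 := (cast_le {2} {1}).mp (by rw [hs1, hs2])
    linarith
  have hsum : wsum w {1, 2} ≤ wsum w {0, 1} := by
    have e1 : wsum w {0, 1} = w 0 + w 1 := by
      simp [wsum, Finset.sum_insert, Finset.sum_singleton]
    have e2 : wsum w {1, 2} = w 1 + w 2 := by
      simp [wsum, Finset.sum_insert, Finset.sum_singleton]
    have e3 : wsum w {0} = w 0 := by simp [wsum]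
    have e4 : wsum w {1} = w 1 := by simp [wsum]
    have e5 : wsum w {2} = w 2 := by simp [wsum]
    rw [e1, e2]
    rw [e3, e4] at w01
    rw [e4, e5] at w12
    linarith
  have := (cast_le {1, 2} {0, 1}).mpr hsum
  rw [h01, h12] at this
  norm_num at this
end

section
/- If (e_n) is w-semi-greedy with constant K̄ and basis constant β, and A is a finite set with w(A) ≤ limsup_n w_n, then max over signs of ||Σ_{n∈A} ± e_n|| ≤ 2βK̄. -/
open Finset Filter

/-- if the basis is `w`-semi-greedy with constant `K` and basis constant `β`,
and `w(A) ≤ limsup wₙ`, then `‖∑_{n∈A} ± eₙ‖ ≤ 2βK` for every choice of signs. -/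
theorem stmt9 {X : Type*} [NormedAddCommGroup X] [NormedSpace ℝ X] [CompleteSpace X]
    (e : ℕ → X) (E : ℕ → X →L[ℝ] ℝ) (w : ℕ → ℝ) (K β : ℝ)
    (hw : ∀ i, 0 < w i) (hb : NormalizedBasis e E)
    (hβ : BasisConstBound e E β) (h : WSemiGreedy w e E K)
    (A : Finset ℕ) (hA : wsum w A ≤ Filter.limsup w Filter.atTop)
    (ε : ℕ → ℝ) (hε : SignVec ε) :
    ‖∑ n ∈ A, ε n • e n‖ ≤ 2 * β * K := by
  obtain ⟨hnorm, hbio, -⟩ := hb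
  -- K is nonnegative
  have hK0 : 0 ≤ K := by
    obtain ⟨c, hc⟩ := h (e 0) ∅ (by intro n hn; simp at hn)
    simp only [Finset.sum_empty, sub_zero] at hc
    rw [hnorm 0] at hc
    have hσ0 : 0 ≤ sigmaW w e (wsum w (∅ : Finset ℕ)) (e 0) := by
      apply le_csInf
      · exact ⟨‖e 0 - ∑ n ∈ (∅ : Finset ℕ), (fun _ => (0:ℝ)) n • e n‖,
          ∅, (fun _ => 0), le_refl _, rfl⟩
      · rintro r ⟨A', c', -, rfl⟩; exact norm_nonneg _
    by_contra hK
    push_neg at hK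
    have : K * sigmaW w e (wsum w (∅ : Finset ℕ)) (e 0) ≤ 0 :=
      mul_nonpos_of_nonpos_of_nonneg hK.le hσ0
    linarith
  -- β is at least one
  have hβ1 : (1:ℝ) ≤ β := by
    have h1 := hβ (e 0) 1
    simp [hbio, hnorm 0] at h1
    linarith
  -- pick the cut point N
  set N := A.sup id + 1 with hNdef
  have hAN : ∀ a ∈ A, a < N := fun a ha =>
    Nat.lt_succ_of_le (Finset.le_sup (f := id) ha)
  have hAsub : A ⊆ Finset.range N := fun a ha => Finset.mem_range.mpr (hAN a ha)
  -- pick two indices beyond N with large total weight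
  obtain ⟨k1, k2, hk1N, hk12, hsum⟩ :
      ∃ k1 k2, N ≤ k1 ∧ k1 < k2 ∧ wsum w A ≤ w k1 + w k2 := by
    rcases A.eq_empty_or_nonempty with rfl | hne
    · refine ⟨N, N + 1, le_refl _, Nat.lt_succ_self _, ?_⟩
      have h1 := hw N; have h2 := hw (N + 1)
      simp only [wsum, Finset.sum_empty]
      linarith
    · have hpos : 0 < wsum w A := Finset.sum_pos (fun i _ => hw i) hne
      have hcob : Filter.IsCoboundedUnder (· ≤ ·) Filter.atTop w :=
        Filter.isCoboundedUnder_le_of_le Filter.atTop (x := 0) (fun i => (hw i).le)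
      have hfreq : ∃ᶠ n in Filter.atTop, wsum w A / 2 < w n :=
        Filter.frequently_lt_of_lt_limsup hcob (lt_of_lt_of_le (by linarith) hA)
      rw [Filter.frequently_atTop] at hfreq
      obtain ⟨k1, hk1, hw1⟩ := hfreq N
      obtain ⟨k2, hk2, hw2⟩ := hfreq (k1 + 1)
      exact ⟨k1, k2, hk1, hk2, by linarith⟩
  have hk2N : N ≤ k2 := le_trans hk1N hk12.le
  have hne12 : k1 ≠ k2 := hk12.ne
  set s := ∑ n ∈ A, ε n • e n with hs
  set x := s + e k1 + e k2 with hx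
  -- coefficients of x
  have hEx : ∀ n, E n x =
      (if n ∈ A then ε n else 0) + (if n = k1 then 1 else 0) + (if n = k2 then 1 else 0) := by
    intro n
    have : E n x = E n s + E n (e k1) + E n (e k2) := by
      rw [hx]; simp [map_add]
    rw [this, hbio, hbio]
    congr 1
    congr 1
    rw [hs, map_sum]
    have : ∀ m ∈ A, E n (ε m • e m) = if n = m then ε m else 0 := by
      intro m hm
      rw [map_smul, hbio, smul_eq_mul]
      split_ifs <;> ring
    rw [Finset.sum_congr rfl this, Finset.sum_ite_eq A n ε]
  -- the greedy set {k1, k2}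
  have hΛ : GreedySet E x ({k1, k2} : Finset ℕ) := by
    intro n hn k hk
    simp only [Finset.mem_insert, Finset.mem_singleton] at hn hk
    push_neg at hk
    have hnA : n ∉ A := by
      intro hmem
      have := hAN n hmem
      rcases hn with rfl | rfl <;> omega
    have hnx : E n x = 1 := by
      rw [hEx n, if_neg hnA]
      rcases hn with rfl | rfl
      · rw [if_pos rfl, if_neg (by omega)]; ring
      · rw [if_neg (by omega), if_pos rfl]; ring
    rw [hnx]
    rw [hEx k, if_neg hk.1, if_neg hk.2, add_zero, add_zero]
    split_ifs with hkA
    · rcases hε k with h1 | h1 <;> rw [h1] <;> norm_num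
    · norm_num
  obtain ⟨c, hc⟩ := h x ({k1, k2} : Finset ℕ) hΛ
  have hwΛ : wsum w ({k1, k2} : Finset ℕ) = w k1 + w k2 := by
    rw [wsum, Finset.sum_pair hne12]
  -- bound on sigmaW
  have hσle : sigmaW w e (wsum w ({k1, k2} : Finset ℕ)) x ≤ 2 := by
    have hxs : x - s = e k1 + e k2 := by rw [hx]; abel
    have hxs2 : ‖x - s‖ ≤ 2 := by
      rw [hxs]
      calc ‖e k1 + e k2‖ ≤ ‖e k1‖ + ‖e k2‖ := norm_add_le _ _
        _ = 2 := by rw [hnorm, hnorm]; norm_num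
    have hbdd : BddBelow {r | ∃ (A' : Finset ℕ) (c' : ℕ → ℝ),
        wsum w A' ≤ wsum w ({k1, k2} : Finset ℕ) ∧ r = ‖x - ∑ n ∈ A', c' n • e n‖} := by
      refine ⟨0, ?_⟩
      rintro r ⟨A', c', -, rfl⟩; exact norm_nonneg _
    have hmem : ‖x - s‖ ∈ {r | ∃ (A' : Finset ℕ) (c' : ℕ → ℝ),
        wsum w A' ≤ wsum w ({k1, k2} : Finset ℕ) ∧ r = ‖x - ∑ n ∈ A', c' n • e n‖} :=
      ⟨A, ε, by rw [hwΛ]; exact hsum, by rw [hs]⟩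
    exact le_trans (csInf_le hbdd hmem) hxs2
  have hc2 : ‖x - ∑ n ∈ ({k1, k2} : Finset ℕ), c n • e n‖ ≤ 2 * K := by
    calc ‖x - ∑ n ∈ ({k1, k2} : Finset ℕ), c n • e n‖
        ≤ K * sigmaW w e (wsum w ({k1, k2} : Finset ℕ)) x := hc
      _ ≤ K * 2 := mul_le_mul_of_nonneg_left hσle hK0
      _ = 2 * K := by ring
  set y := x - ∑ n ∈ ({k1, k2} : Finset ℕ), c n • e n with hy
  -- partial sum projection recovers s
  have hEy : ∀ n ∈ Finset.range N, E n y • e n = (if n ∈ A then ε n • e n else 0) := by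
    intro n hn
    rw [Finset.mem_range] at hn
    have hn1 : n ≠ k1 := by omega
    have hn2 : n ≠ k2 := by omega
    have hz : E n (∑ m ∈ ({k1, k2} : Finset ℕ), c m • e m) = 0 := by
      rw [Finset.sum_pair hne12, map_add, map_smul, map_smul, hbio, hbio]
      simp [hn1, hn2]
    have : E n y = if n ∈ A then ε n else 0 := by
      rw [hy, map_sub, hz, hEx n, if_neg hn1, if_neg hn2]
      ring
    rw [this]
    split_ifs <;> simp
  have hproj := hβ y N
  rw [Finset.sum_congr rfl hEy] at hproj
  have hps : ∑ n ∈ Finset.range N, (if n ∈ A then ε n • e n else 0) = s := by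
    rw [hs]
    rw [← Finset.sum_subset hAsub (fun a _ ha2 => if_neg ha2)]
    exact Finset.sum_congr rfl (fun n hn => if_pos hn)
  rw [hps] at hproj
  calc ‖s‖ ≤ β * ‖y‖ := hproj
    _ ≤ β * (2 * K) := mul_le_mul_of_nonneg_left hc2 (by linarith)
    _ = 2 * β * K := by ring
end
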